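/- Let q ≥ 2 be even, let n ≥ 2, let π : Fin q → Equiv.Perm (ZMod q), and set s : ZMod q equal to 0 if n is even and equal to the image of the natural number q/2 in ZMod q if n is odd. If there is no bijection y : Fin q → ZMod q with ∑_{j : Fin q} π j (y j) = s in ZMod q, then the layer-latin (n+1)-cube of order q whose layer j is L[π j, n] has no transversal. -/
import Mathlib

lemma zmod_sum_univ (q : ℕ) [NeZero q] (heven : Even q) :
    ∑ x : ZMod q, x = ((q / 2 : ℕ) : ZMod q) := by
  have hq : 0 < q := Nat.pos_of_ne_zero (NeZero.ne q)
  have hb : Function.Bijective (fun i : Fin q => ((i : ℕ) : ZMod q)) := by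
    constructor
    · intro a b hab
      have := congrArg ZMod.val hab
      simpa [ZMod.val_cast_of_lt a.isLt, ZMod.val_cast_of_lt b.isLt, Fin.ext_iff] using this
    · intro x
      exact ⟨⟨x.val, ZMod.val_lt x⟩, by simp [ZMod.natCast_val]⟩
  have h1 : ∑ x : ZMod q, x = ∑ i : Fin q, ((i : ℕ) : ZMod q) :=
    (Function.Bijective.sum_comp hb id).symm
  rw [h1, ← Finset.sum_range (fun i => ((i : ℕ) : ZMod q)), ← Nat.cast_sum]
  obtain ⟨k, hk⟩ := heven
  have h2 : ∑ i ∈ Finset.range q, i = k * (q - 1) := by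
    have h := Finset.sum_range_id_mul_two q
    have h' : k * (q - 1) * 2 = q * (q - 1) := by rw [hk]; ring
    exact Nat.eq_of_mul_eq_mul_right two_pos (h.trans h'.symm)
  have hk2 : q / 2 = k := by omega
  rw [h2, hk2]
  have : (k * (q - 1) : ℕ) = k * q - k := by
    have hkq : k * (q - 1) + k = k * q := by
      rw [← Nat.mul_succ]
      congr 1
      omega
    omega
  rw [this]
  have hle : k ≤ k * q := Nat.le_mul_of_pos_right k hq
  rw [Nat.cast_sub hle, Nat.cast_mul, ZMod.natCast_self, mul_zero, zero_sub]
  -- -k = k since 2k = q ≡ 0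
  have h2k : ((k : ZMod q)) + k = 0 := by
    have : ((2 * k : ℕ) : ZMod q) = 0 := by rw [show 2 * k = q by omega, ZMod.natCast_self]
    push_cast at this
    linear_combination this
  linear_combination -h2k

/-- If the row-latin square formed by the permutations `π j` has no diagonal with sum
`s` (where `s = 0` for even `n` and `s = q/2` for odd `n`), then the layer-latin
`(n+1)`-cube of even order `q` with layers `L[π j, n]` has no transversal. -/
theorem layer_latin_cube_even_order_no_transversal
    (q n : ℕ) (hq : 2 ≤ q) (heven : Even q) (hn : 2 ≤ n)
    (π : Fin q → Equiv.Perm (ZMod q))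
    (hdiag : ¬ ∃ y : Fin q → ZMod q, Function.Bijective y ∧
      (∑ j : Fin q, π j (y j)) =
        (if Even n then (0 : ZMod q) else ((q / 2 : ℕ) : ZMod q))) :
    ¬ ∃ u : Fin q → Fin n → ZMod q,
        (∀ j : Fin n, Function.Bijective fun l => u l j) ∧
        Function.Bijective fun l =>
          π l (u l ⟨0, by omega⟩) +
            ∑ m ∈ Finset.univ.filter (fun m : Fin n => m ≠ ⟨0, by omega⟩), u l m := by
  haveI : NeZero q := ⟨by omega⟩
  rintro ⟨u, hcols, hF⟩
  apply hdiag
  set z : Fin n := ⟨0, by omega⟩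
  set S : ZMod q := ((q / 2 : ℕ) : ZMod q) with hS
  have hSsum : ∑ x : ZMod q, x = S := zmod_sum_univ q heven
  have h2S : S + S = 0 := by
    obtain ⟨j, hj⟩ := heven
    have : ((q / 2 + q / 2 : ℕ) : ZMod q) = ((q : ℕ) : ZMod q) := by
      congr 1; omega
    rw [ZMod.natCast_self] at this
    push_cast at this
    exact this
  have hevsmul : ∀ k : ℕ, Even k → k • S = 0 := by
    rintro k ⟨j, rfl⟩
    rw [add_nsmul, ← smul_add, h2S, smul_zero]
  -- total sum of the transversal values
  have hFsum : ∑ l : Fin q, (π l (u l z) +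
      ∑ m ∈ Finset.univ.filter (fun m : Fin n => m ≠ z), u l m) = S := by
    have h := Function.Bijective.sum_comp hF id
    simp only [id] at h
    rw [h, hSsum]
  rw [Finset.sum_add_distrib, Finset.sum_comm] at hFsum
  refine ⟨fun l => u l z, hcols z, ?_⟩
  have hcol : ∀ m : Fin n, ∑ x : Fin q, u x m = S := fun m => by
    have h := Function.Bijective.sum_comp (hcols m) id
    simp only [id] at h
    rw [h, hSsum]
  have hcard : (Finset.univ.filter (fun m : Fin n => m ≠ z)).card = n - 1 := by
    rw [Finset.filter_ne', Finset.card_erase_of_mem (Finset.mem_univ z)]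
    simp
  rw [Finset.sum_congr rfl (fun m _ => hcol m), Finset.sum_const, hcard] at hFsum
  by_cases hne : Even n
  · simp only [hne, if_true]
    obtain ⟨j, hj⟩ : ∃ j, n - 1 = 2 * j + 1 := by
      obtain ⟨k, hk⟩ := hne; exact ⟨k - 1, by omega⟩
    rw [hj, add_nsmul, hevsmul (2 * j) ⟨j, two_mul j⟩, zero_add, one_nsmul] at hFsum
    linear_combination hFsum
  · simp only [hne, if_false]
    obtain ⟨k, hk⟩ := Nat.not_even_iff_odd.mp hne
    rw [hevsmul (n - 1) ⟨k, by omega⟩, add_zero] at hFsum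
    exact hFsum
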